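/- Let G be a finite group acting on a scheme X over a base scheme S. If X is separated over S, then the inclusion X^G → X of the fixed point functor is a closed immersion; in general it is a locally closed immersion (in particular X^G is representable by a scheme). -/

import Mathlib

open AlgebraicGeometry CategoryTheory CategoryTheory.Limits

lemma isImmersion_prodLift (X : Scheme) : IsImmersion (prod.lift (𝟙 X) (𝟙 X)) := by
  rw [← MorphismProperty.cancel_right_of_respectsIso @IsImmersion (prod.lift (𝟙 X) (𝟙 X)) (prodIsoPullback X X).hom
    (hP := by apply MorphismProperty.RespectsIso.mk <;> intro X Y Z e f hf <;> infer_instance)]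
  convert (inferInstance : IsImmersion (pullback.diagonal (terminal.from X)))
  apply pullback.hom_ext <;> simp
  · exact prod.lift_fst _ _
  · exact prod.lift_snd _ _

lemma isImmersion_equalizer_ι {X Y : Scheme} (f g : X ⟶ Y) :
    IsImmersion (equalizer.ι f g) :=
  MorphismProperty.of_isPullback (isPullback_equalizer_prod f g).flip (isImmersion_prodLift Y)

lemma isClosedImmersion_equalizer_ι (S : Scheme) {X Y : Scheme} (πY : Y ⟶ S) [IsSeparated πY]
    (f g : X ⟶ Y) (h : f ≫ πY = g ≫ πY) : IsClosedImmersion (equalizer.ι f g) := by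
  let Xo : Over S := Over.mk (g ≫ πY)
  let Yo : Over S := Over.mk πY
  let fo : Xo ⟶ Yo := Over.homMk f h
  let go : Xo ⟶ Yo := Over.homMk g rfl
  have hs : IsSeparated Yo.hom := ‹_›
  have h1 : IsClosedImmersion (equalizer.ι fo go).left :=
    isClosedImmersion_equalizer_ι_left fo go
  have h2 : equalizerComparison fo go (Over.forget S) ≫
      equalizer.ι ((Over.forget S).map fo) ((Over.forget S).map go) =
      (Over.forget S).map (equalizer.ι fo go) := equalizerComparison_comp_π fo go (Over.forget S)
  rw [show (Over.forget S).map (equalizer.ι fo go) = (equalizer.ι fo go).left from rfl] at h2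
  rw [← h2] at h1
  replace h1 := (MorphismProperty.cancel_left_of_respectsIso @IsClosedImmersion (equalizerComparison fo go (Over.forget S))
    (equalizer.ι ((Over.forget S).map fo) ((Over.forget S).map go))).mp h1
  exact h1

lemma fixedPointScheme_aux {G : Type} [Group G]
    (S X : Scheme) (πX : X ⟶ S) (act : G →* Aut X)
    (hact : ∀ g : G, (act g).hom ≫ πX = πX) (l : List G) :
    ∃ (F : Scheme) (i : F ⟶ X),
      (∀ (T : Scheme) (f : T ⟶ X),
        (∀ g ∈ l, f ≫ (act g).hom = f) ↔ ∃! h : T ⟶ F, h ≫ i = f) ∧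
      IsImmersion i ∧
      (IsSeparated πX → IsClosedImmersion i) := by
  induction l with
  | nil =>
    refine ⟨X, 𝟙 X, fun T f => ⟨fun _ => ⟨f, by simp, fun h hh => by simpa using hh⟩,
      fun _ g hg => by simp at hg⟩, inferInstance, fun _ => inferInstance⟩
  | cons g l ih =>
    obtain ⟨F, i, huniv, himm, hclosed⟩ := ih
    have : IsImmersion i := himm
    let E := equalizer (i ≫ (act g).hom) i
    let ι : E ⟶ F := equalizer.ι _ _
    have hι : IsImmersion ι := isImmersion_equalizer_ι _ _
    have hcond : ι ≫ (i ≫ (act g).hom) = ι ≫ i := equalizer.condition _ _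
    refine ⟨E, ι ≫ i, fun T f => ?_, inferInstance, fun hsep => ?_⟩
    · constructor
      · intro hf
        obtain ⟨h, hh, hun⟩ := (huniv T f).mp (fun g' hg' => hf g' (List.mem_cons_of_mem _ hg'))
        have hfix : h ≫ (i ≫ (act g).hom) = h ≫ i := by
          rw [← Category.assoc, hh, hf g List.mem_cons_self, ← hh]
        refine ⟨equalizer.lift h hfix, ?_, ?_⟩
        · show equalizer.lift h hfix ≫ ι ≫ i = f
          rw [← Category.assoc, equalizer.lift_ι, hh]
        intro h' hh'
        have : (h' ≫ ι) ≫ i = f := by rw [Category.assoc]; exact hh'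
        have h'ι : h' ≫ ι = h := hun _ this
        rw [← cancel_mono ι, equalizer.lift_ι, h'ι]
      · rintro ⟨h, hh, -⟩ g' hg'
        rcases List.mem_cons.mp hg' with rfl | hg'
        · calc f ≫ (act g').hom = h ≫ ι ≫ (i ≫ (act g').hom) := by
                rw [← hh]; simp [Category.assoc]
            _ = h ≫ ι ≫ i := by rw [hcond]
            _ = f := by rw [← Category.assoc]; exact hh
        · refine (huniv T f).mpr ⟨h ≫ ι, by show (h ≫ ι) ≫ i = f; rw [Category.assoc]; exact hh, ?_⟩ g' hg'
          intro k hk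
          rw [← cancel_mono i, hk, Category.assoc, hh]
    · have hc := hclosed hsep
      have : IsClosedImmersion ι :=
        isClosedImmersion_equalizer_ι S πX _ _ (by rw [Category.assoc, hact])
      infer_instance

theorem fixedPointScheme_exists_immersion {G : Type} [Group G] [Fintype G]
    (S X : Scheme) (πX : X ⟶ S) (act : G →* Aut X)
    (hact : ∀ g : G, (act g).hom ≫ πX = πX) :
    ∃ (F : Scheme) (i : F ⟶ X),
      (∀ (T : Scheme) (f : T ⟶ X),
        (∀ g : G, f ≫ (act g).hom = f) ↔ ∃! h : T ⟶ F, h ≫ i = f) ∧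
      IsImmersion i ∧
      (IsSeparated πX → IsClosedImmersion i) := by
  obtain ⟨F, i, huniv, h1, h2⟩ :=
    fixedPointScheme_aux S X πX act hact Finset.univ.toList
  refine ⟨F, i, fun T f => ?_, h1, h2⟩
  rw [← huniv T f]
  simp [Finset.mem_toList]
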